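/- Let G be a graph, v a vertex of G, and for each k let A_k be the number of vertex subsets S of size k with v ∈ S such that G[S] is connected, and B_k the number of vertex subsets S of size k with v ∉ S such that G[S] is connected. Then the Shapley value of v in the connectivity game v^conn equals (1/|V|!) · [ A_2 · (|V|−2)! + Σ_{k=2}^{|V|−1} (A_{k+1} − B_k) · k! · (|V|−k−1)! ]. -/

import Mathlib

open Finset Classical

/-- The Shapley value of player `i` in the coalitional game with characteristic function `w`. -/
noncomputable def shapley {N : Type*} [Fintype N] [DecidableEq N]
    (w : Finset N → ℝ) (i : N) : ℝ :=
  ∑ S ∈ (Finset.univ.erase i).powerset,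
    ((S.card.factorial * (Fintype.card N - S.card - 1).factorial : ℕ) : ℝ)
      / ((Fintype.card N).factorial : ℝ) * (w (insert i S) - w S)

/-- The connectivity game `v^conn`: a coalition has value 1 iff it induces a connected
subgraph and has more than one member. -/
noncomputable def vconn {V : Type*} [Fintype V] [DecidableEq V]
    (G : SimpleGraph V) (S : Finset V) : ℝ :=
  if (G.induce (↑S : Set V)).Connected ∧ 1 < S.card then 1 else 0

/-- Number of connected coalitions of size `k` containing `v`. -/
noncomputable def numConnWith {V : Type*} [Fintype V] [DecidableEq V]
    (G : SimpleGraph V) (v : V) (k : ℕ) : ℕ :=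
  ((Finset.univ.powersetCard k).filter
    (fun S : Finset V => v ∈ S ∧ (G.induce (↑S : Set V)).Connected)).card

/-- Number of connected coalitions of size `k` not containing `v`. -/
noncomputable def numConnWithout {V : Type*} [Fintype V] [DecidableEq V]
    (G : SimpleGraph V) (v : V) (k : ℕ) : ℕ :=
  ((Finset.univ.powersetCard k).filter
    (fun S : Finset V => v ∉ S ∧ (G.induce (↑S : Set V)).Connected)).card

lemma sum_vconn_without {V : Type*} [Fintype V] [DecidableEq V] (G : SimpleGraph V) (v : V) (k : ℕ) :
    ∑ S ∈ (Finset.univ.erase v).powersetCard k, vconn G S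
      = if 1 < k then (numConnWithout G v k : ℝ) else 0 := by
  unfold vconn
  by_cases hk : 1 < k
  · rw [if_pos hk]
    have h1 : ∀ S ∈ (Finset.univ.erase v).powersetCard k,
        (if (G.induce (↑S : Set V)).Connected ∧ 1 < S.card then (1:ℝ) else 0)
          = if (G.induce (↑S : Set V)).Connected then (1:ℝ) else 0 := by
      intro S hS
      rw [mem_powersetCard] at hS
      simp [hS.2, hk]
    rw [Finset.sum_congr rfl h1, Finset.sum_boole]
    congr 2
    ext S
    simp only [mem_filter, mem_powersetCard, numConnWithout, subset_erase,
      Finset.subset_univ, true_and]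
    tauto
  · rw [if_neg hk]
    apply Finset.sum_eq_zero
    intro S hS
    rw [mem_powersetCard] at hS
    rw [if_neg]
    rw [hS.2]
    tauto

lemma sum_vconn_with {V : Type*} [Fintype V] [DecidableEq V] (G : SimpleGraph V) (v : V) (k : ℕ) :
    ∑ S ∈ (Finset.univ.erase v).powersetCard k, vconn G (insert v S)
      = if 1 ≤ k then (numConnWith G v (k+1) : ℝ) else 0 := by
  have himg : ∑ S ∈ (Finset.univ.erase v).powersetCard k, vconn G (insert v S)
      = ∑ T ∈ (Finset.univ.powersetCard (k+1)).filter (fun T => v ∈ T), vconn G T := by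
    apply Finset.sum_nbij' (fun S => insert v S) (fun T => T.erase v)
    · intro S hS
      rw [mem_powersetCard, subset_erase] at hS
      simp only [mem_filter, mem_powersetCard, Finset.subset_univ, true_and,
        Finset.mem_insert_self, and_true]
      rw [Finset.card_insert_of_notMem hS.1.2, hS.2]
    · intro T hT
      simp only [mem_filter, mem_powersetCard] at hT
      rw [mem_powersetCard, subset_erase]
      refine ⟨⟨Finset.subset_univ _, Finset.notMem_erase _ _⟩, ?_⟩
      rw [Finset.card_erase_of_mem hT.2, hT.1.2]
      omega
    · intro S hS
      rw [mem_powersetCard, subset_erase] at hS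
      exact Finset.erase_insert hS.1.2
    · intro T hT
      simp only [mem_filter] at hT
      exact Finset.insert_erase hT.2
    · intro S hS; rfl
  rw [himg]
  unfold vconn
  by_cases hk : 1 ≤ k
  · rw [if_pos hk]
    have h1 : ∀ T ∈ (Finset.univ.powersetCard (k+1)).filter (fun T => v ∈ T),
        (if (G.induce (↑T : Set V)).Connected ∧ 1 < T.card then (1:ℝ) else 0)
          = if (G.induce (↑T : Set V)).Connected then (1:ℝ) else 0 := by
      intro T hT
      simp only [mem_filter, mem_powersetCard] at hT
      have : 1 < T.card := by omega
      simp [this]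
    rw [Finset.sum_congr rfl h1, Finset.sum_boole]
    congr 2
    ext T
    simp only [mem_filter, numConnWith, mem_powersetCard]
    tauto
  · have hk0 : k = 0 := by omega
    subst hk0
    rw [if_neg (by norm_num)]
    apply Finset.sum_eq_zero
    intro T hT
    simp only [mem_filter, mem_powersetCard] at hT
    rw [if_neg]
    rw [hT.1.2]
    simp

/-- formula for the Shapley value of the connectivity game in terms of the
counts of connected coalitions of each size containing / not containing `v`. -/
theorem shapley_vconn_formula {V : Type*} [Fintype V] [DecidableEq V]
    (G : SimpleGraph V) (v : V) :
    shapley (vconn G) v =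
      (1 / ((Fintype.card V).factorial : ℝ)) *
        ((numConnWith G v 2 : ℝ) * ((Fintype.card V - 2).factorial : ℕ) +
          ∑ k ∈ Finset.Icc 2 (Fintype.card V - 1),
            ((numConnWith G v (k + 1) : ℝ) - (numConnWithout G v k : ℝ)) *
              (k.factorial : ℕ) * (((Fintype.card V - k - 1).factorial : ℕ) : ℝ)) := by
  classical
  have hn : 1 ≤ Fintype.card V := Fintype.card_pos_iff.mpr ⟨v⟩
  set n := Fintype.card V with hnn
  have hcard : (Finset.univ.erase v).card = n - 1 := by
    rw [Finset.card_erase_of_mem (Finset.mem_univ v), Finset.card_univ]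
  unfold shapley
  rw [Finset.sum_powerset, hcard]
  have hstep : ∀ j, ∑ S ∈ (Finset.univ.erase v).powersetCard j,
      ((S.card.factorial * (n - S.card - 1).factorial : ℕ) : ℝ) / (n.factorial : ℝ)
        * (vconn G (insert v S) - vconn G S)
    = ((j.factorial * (n - j - 1).factorial : ℕ) : ℝ) / (n.factorial : ℝ)
        * ((if 1 ≤ j then (numConnWith G v (j+1) : ℝ) else 0)
            - (if 1 < j then (numConnWithout G v j : ℝ) else 0)) := by
    intro j
    rw [← sum_vconn_with G v j, ← sum_vconn_without G v j, ← Finset.sum_sub_distrib,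
      Finset.mul_sum]
    apply Finset.sum_congr rfl
    intro S hS
    rw [(Finset.mem_powersetCard.mp hS).2]
  rw [Finset.sum_congr rfl (fun j _ => hstep j)]
  by_cases h1 : n = 1
  · rw [h1]
    have hA : numConnWith G v 2 = 0 := by
      have : (Finset.univ : Finset V).powersetCard 2 = ∅ := by
        rw [Finset.powersetCard_eq_empty]
        rw [Finset.card_univ, ← hnn, h1]; norm_num
      simp [numConnWith, this]
    simp [hA]
  · have h2 : 2 ≤ n := by omega
    have hrange : n - 1 + 1 = n := by omega
    rw [hrange]
    have hsplit : Finset.range n = Finset.Ico 0 2 ∪ Finset.Ico 2 n := by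
      rw [Finset.range_eq_Ico, ← Finset.Ico_union_Ico_eq_Ico (by omega : (0:ℕ) ≤ 2) h2]
    rw [hsplit, Finset.sum_union (by
      apply Finset.Ico_disjoint_Ico_consecutive)]
    have hIco02 : Finset.Ico 0 2 = {0, 1} := by decide
    rw [hIco02, Finset.sum_insert (by decide), Finset.sum_singleton]
    have hIcc : Finset.Ico 2 n = Finset.Icc 2 (n - 1) := by
      rw [← Finset.Ico_add_one_right_eq_Icc]; congr 1; omega
    rw [hIcc]
    have hne : (n.factorial : ℝ) ≠ 0 := Nat.cast_ne_zero.mpr n.factorial_ne_zero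
    have hsum : ∑ k ∈ Finset.Icc 2 (n-1),
        ((k.factorial * (n - k - 1).factorial : ℕ) : ℝ) / (n.factorial : ℝ)
          * ((if 1 ≤ k then (numConnWith G v (k+1) : ℝ) else 0)
              - (if 1 < k then (numConnWithout G v k : ℝ) else 0))
      = ∑ k ∈ Finset.Icc 2 (n-1), (1 / (n.factorial : ℝ)) *
          (((numConnWith G v (k + 1) : ℝ) - (numConnWithout G v k : ℝ)) *
              (k.factorial : ℕ) * (((n - k - 1).factorial : ℕ) : ℝ)) := by
      apply Finset.sum_congr rfl
      intro k hk
      have h2k : 2 ≤ k := (Finset.mem_Icc.mp hk).1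
      rw [if_pos (by omega), if_pos (by omega)]
      push_cast
      field_simp
    rw [hsum, ← Finset.mul_sum]
    norm_num
    rw [Nat.sub_sub]
    push_cast
    ring
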